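/- For every T > 0 and β ∈ (0,1), there is a constant C = C(T, β, d) > 0 such that for all 0 < t₁ < t₂ ≤ T and x ∈ R^d, |g(t₁,x) − g(t₂,x)| ≤ C |t₂ − t₁|^{β/2} (t₁^{−β/2} g(2t₁, x) + t₂^{−β/2} g(2t₂, x)). -/

import Mathlib

open Real MeasureTheory

lemma gaussDeriv (p a t : ℝ) (ht : 0 < t) :
    HasDerivAt (fun s : ℝ => (4 * π * s) ^ p * Real.exp (-a / (4 * s)))
      ((4 * π * t) ^ p * Real.exp (-a / (4 * t)) * (p / t + a / (4 * t ^ 2))) t := by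
  have h4 : (0:ℝ) < 4 * π * t := by positivity
  have h1 : HasDerivAt (fun s : ℝ => 4 * π * s) (4 * π) t := by
    simpa using (hasDerivAt_id t).const_mul (4 * π)
  have h2 : HasDerivAt (fun s : ℝ => (4 * π * s) ^ p)
      (4 * π * p * (4 * π * t) ^ (p - 1)) t := h1.rpow_const (Or.inl h4.ne')
  have h3 : HasDerivAt (fun s : ℝ => -a / (4 * s)) (a / (4 * t ^ 2)) t := by
    have h := (hasDerivAt_inv ht.ne').const_mul (-a / 4)
    have he : (fun s : ℝ => -a / (4 * s)) = fun s : ℝ => -a / 4 * s⁻¹ := by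
      funext s; field_simp
    rw [he]
    refine h.congr_deriv ?_
    field_simp
  have h4e : HasDerivAt (fun s : ℝ => Real.exp (-a / (4 * s)))
      (Real.exp (-a / (4 * t)) * (a / (4 * t ^ 2))) t := by
    simpa [mul_comm] using h3.exp
  have := h2.mul h4e
  refine this.congr_deriv ?_
  have hsub : (4 * π * t) ^ (p - 1) = (4 * π * t) ^ p / (4 * π * t) := by
    rw [Real.rpow_sub h4, Real.rpow_one]
  rw [hsub]
  field_simp

lemma gaussDerivBound (d : ℕ) (a t : ℝ) (ht : 0 < t) (ha : 0 ≤ a) :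
    |(4 * π * t) ^ (-(d:ℝ)/2) * Real.exp (-a / (4 * t)) * ((-(d:ℝ)/2) / t + a / (4 * t ^ 2))|
      ≤ ((d:ℝ)/2 + 2) / t * ((4 * π * t) ^ (-(d:ℝ)/2) * Real.exp (-a / (8 * t))) := by
  have h4 : (0:ℝ) < 4 * π * t := by positivity
  have hr : (0:ℝ) ≤ (4 * π * t) ^ (-(d:ℝ)/2) := Real.rpow_nonneg h4.le _
  rw [abs_mul, abs_of_nonneg (by positivity : (0:ℝ) ≤ (4 * π * t) ^ (-(d:ℝ)/2) * Real.exp (-a/(4*t)))]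
  have habs : |(-(d:ℝ)/2) / t + a / (4 * t ^ 2)| ≤ (d:ℝ)/(2*t) + a / (4 * t ^ 2) := by
    have h1 : |(-(d:ℝ)/2) / t| = (d:ℝ)/(2*t) := by
      rw [abs_div, abs_of_pos ht,
        abs_of_nonpos (by have := Nat.cast_nonneg (α := ℝ) d; linarith : (-(d:ℝ)/2) ≤ 0)]
      ring
    calc |(-(d:ℝ)/2) / t + a / (4 * t ^ 2)| ≤ |(-(d:ℝ)/2) / t| + |a / (4 * t ^ 2)| := abs_add_le _ _
    _ = (d:ℝ)/(2*t) + a / (4 * t ^ 2) := by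
        rw [h1, abs_of_nonneg (by positivity : (0:ℝ) ≤ a / (4*t^2))]
  have key : Real.exp (-a / (4 * t)) * ((d:ℝ)/(2*t) + a / (4 * t ^ 2)) ≤
      ((d:ℝ)/2 + 2) / t * Real.exp (-a / (8 * t)) := by
    have hsplit : Real.exp (-a / (4 * t)) = Real.exp (-a / (8 * t)) * Real.exp (-a / (8 * t)) := by
      rw [← Real.exp_add]; congr 1; field_simp; ring
    rw [hsplit]
    have hu : a / (8 * t) * Real.exp (-(a / (8 * t))) ≤ 1 := by
      have h := Real.add_one_le_exp (a / (8 * t))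
      have he : (0:ℝ) < Real.exp (a / (8 * t)) := Real.exp_pos _
      rw [Real.exp_neg]
      calc a / (8*t) * (Real.exp (a/(8*t)))⁻¹ ≤ Real.exp (a/(8*t)) * (Real.exp (a/(8*t)))⁻¹ :=
            mul_le_mul_of_nonneg_right (by linarith) (inv_nonneg.mpr he.le)
        _ = 1 := mul_inv_cancel₀ he.ne'
    have he1 : Real.exp (-(a / (8 * t))) ≤ 1 :=
      Real.exp_le_one_iff.mpr (neg_nonpos.mpr (by positivity))
    have heq : (d:ℝ)/(2*t) + a / (4 * t ^ 2) = ((d:ℝ)/2 + 2 * (a/(8*t))) / t := by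
      field_simp; ring
    rw [heq]
    have hnn : (0:ℝ) ≤ Real.exp (-(a/(8*t))) := (Real.exp_pos _).le
    have hc : (0:ℝ) ≤ (d:ℝ)/2 := by positivity
    have : Real.exp (-(a/(8*t))) * ((d:ℝ)/2 + 2 * (a/(8*t))) ≤ (d:ℝ)/2 + 2 := by
      nlinarith [hu, mul_le_of_le_one_left hc he1]
    calc Real.exp (-a/(8*t)) * Real.exp (-a/(8*t)) * (((d:ℝ)/2 + 2 * (a/(8*t))) / t)
        = (Real.exp (-(a/(8*t))) * ((d:ℝ)/2 + 2 * (a/(8*t)))) / t * Real.exp (-(a/(8*t))) := by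
          rw [neg_div]; ring
      _ ≤ ((d:ℝ)/2 + 2) / t * Real.exp (-(a/(8*t))) := by
          gcongr
      _ = ((d:ℝ)/2 + 2) / t * Real.exp (-a/(8*t)) := by rw [neg_div]
  calc (4 * π * t) ^ (-(d:ℝ)/2) * Real.exp (-a/(4*t)) * |(-(d:ℝ)/2) / t + a / (4 * t ^ 2)|
      ≤ (4 * π * t) ^ (-(d:ℝ)/2) * (Real.exp (-a/(4*t)) * ((d:ℝ)/(2*t) + a / (4 * t ^ 2))) := by
        rw [mul_assoc]; gcongr
    _ ≤ (4 * π * t) ^ (-(d:ℝ)/2) * (((d:ℝ)/2 + 2) / t * Real.exp (-a/(8*t))) := by gcongr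
    _ = ((d:ℝ)/2 + 2) / t * ((4 * π * t) ^ (-(d:ℝ)/2) * Real.exp (-a/(8*t))) := by ring

lemma gaussDouble (d : ℕ) (t : ℝ) (ht : 0 < t) :
    (4*π*t) ^ (-(d:ℝ)/2) = (2:ℝ)^((d:ℝ)/2) * (4*π*(2*t)) ^ (-(d:ℝ)/2) := by
  have h4 : (0:ℝ) < 4*π*t := by positivity
  have h1 : (4*π*(2*t)) = 2 * (4*π*t) := by ring
  rw [h1, Real.mul_rpow (by norm_num : (0:ℝ) ≤ 2) h4.le, ← mul_assoc,
    ← Real.rpow_add (by norm_num : (0:ℝ) < 2)]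
  rw [show (d:ℝ)/2 + -(d:ℝ)/2 = 0 by ring, Real.rpow_zero, one_mul]

set_option maxHeartbeats 1000000 in
theorem gaussian_holder_time (d : ℕ) (g : ℝ → EuclideanSpace ℝ (Fin d) → ℝ)
    (hg : ∀ t x, g t x = (4 * π * t) ^ (-(d : ℝ) / 2) * Real.exp (-‖x‖ ^ 2 / (4 * t))) :
    ∀ T : ℝ, 0 < T → ∀ β : ℝ, β ∈ Set.Ioo (0 : ℝ) 1 →
      ∃ C > 0, ∀ t₁ t₂ : ℝ, 0 < t₁ → t₁ < t₂ → t₂ ≤ T → ∀ x : EuclideanSpace ℝ (Fin d),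
        |g t₁ x - g t₂ x| ≤
          C * |t₂ - t₁| ^ (β / 2) *
            (t₁ ^ (-β / 2) * g (2 * t₁) x + t₂ ^ (-β / 2) * g (2 * t₂) x) := by
  intro T hT β hβ
  obtain ⟨hβ0, hβ1⟩ := hβ
  refine ⟨((d:ℝ)/2 + 2) * 2^(d+1) + 2^(d+1), by positivity, ?_⟩
  intro t₁ t₂ ht₁ h12 h2T x
  have ht₂ : 0 < t₂ := ht₁.trans h12
  have ha0 : (0:ℝ) ≤ ‖x‖^2 := by positivity
  rw [abs_of_pos (sub_pos.mpr h12)]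
  have hg2 : ∀ t : ℝ, 0 < t → g (2*t) x = (4*π*(2*t))^(-(d:ℝ)/2) * Real.exp (-‖x‖^2/(8*t)) := by
    intro t ht
    rw [hg]
    congr 2
    ring
  have hgnn : ∀ t : ℝ, 0 < t → 0 ≤ g t x := by
    intro t ht; rw [hg]
    have h4 : (0:ℝ) < 4*π*t := by positivity
    positivity
  have hG1 : 0 ≤ g (2*t₁) x := hgnn _ (by linarith)
  have hG2 : 0 ≤ g (2*t₂) x := hgnn _ (by linarith)
  have hE1 : (1:ℝ) ≤ (2:ℝ)^((d:ℝ)/2) := Real.one_le_rpow (by norm_num) (by positivity)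
  have hEd2 : (2:ℝ)^((d:ℝ)/2) * (2:ℝ)^((d:ℝ)/2) = (2:ℝ)^(d:ℕ) := by
    rw [← Real.rpow_add (by norm_num : (0:ℝ) < 2), ← Real.rpow_natCast 2 d]
    norm_num
  have hEd : (2:ℝ)^((d:ℝ)/2) ≤ (2:ℝ)^(d:ℕ) := by nlinarith
  have hβ2 : (0:ℝ) ≤ β/2 := by linarith
  have hpow1 : (0:ℝ) ≤ (t₂-t₁)^(β/2) := Real.rpow_nonneg (by linarith) _
  have hterm1 : (0:ℝ) ≤ t₁^(-β/2) * g (2*t₁) x :=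
    mul_nonneg (Real.rpow_nonneg ht₁.le _) hG1
  have hterm2 : (0:ℝ) ≤ t₂^(-β/2) * g (2*t₂) x :=
    mul_nonneg (Real.rpow_nonneg ht₂.le _) hG2
  have hsplit : ∀ t : ℝ, 0 < t → ((t₂-t₁)/t)^(β/2) = (t₂-t₁)^(β/2) * t^(-β/2) := by
    intro t ht
    rw [Real.div_rpow (by linarith) ht.le, neg_div, Real.rpow_neg ht.le, div_eq_mul_inv]
  have hmono : ∀ t : ℝ, 0 < t → g t x ≤ (2:ℝ)^((d:ℝ)/2) * g (2*t) x := by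
    intro t ht
    rw [hg t x, hg2 t ht, gaussDouble d t ht, mul_assoc]
    have hb : (0:ℝ) ≤ (2:ℝ)^((d:ℝ)/2) := by positivity
    apply mul_le_mul_of_nonneg_left _ hb
    apply mul_le_mul_of_nonneg_left _ (Real.rpow_nonneg (by positivity) _)
    apply Real.exp_le_exp.mpr
    have h8 : ‖x‖^2/(8*t) ≤ ‖x‖^2/(4*t) := by
      rw [div_le_div_iff₀ (by linarith) (by linarith)]
      nlinarith
    rw [neg_div, neg_div]
    linarith
  rcases le_total t₂ (2*t₁) with hcase | hcase
  · -- t₂ ≤ 2 t₁ : mean value theorem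
    set f : ℝ → ℝ := fun s => (4*π*s)^(-(d:ℝ)/2) * Real.exp (-‖x‖^2/(4*s)) with hf
    set f' : ℝ → ℝ := fun s =>
      (4*π*s)^(-(d:ℝ)/2) * Real.exp (-‖x‖^2/(4*s)) * ((-(d:ℝ)/2)/s + ‖x‖^2/(4*s^2)) with hf'
    have hderiv : ∀ s ∈ Set.Ioo t₁ t₂, HasDerivAt f (f' s) s :=
      fun s hs => gaussDeriv (-(d:ℝ)/2) (‖x‖^2) s (ht₁.trans hs.1)
    have hcont : ContinuousOn f (Set.Icc t₁ t₂) := fun s hs =>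
      ((gaussDeriv (-(d:ℝ)/2) (‖x‖^2) s (lt_of_lt_of_le ht₁ hs.1)).continuousAt).continuousWithinAt
    obtain ⟨ξ, hξ, hslope⟩ := exists_hasDerivAt_eq_slope f f' h12 hcont hderiv
    have hξ0 : 0 < ξ := ht₁.trans hξ.1
    have hne : t₂ - t₁ ≠ 0 := sub_ne_zero.mpr h12.ne'
    have hdiff : f t₂ - f t₁ = f' ξ * (t₂ - t₁) := by
      rw [hslope]; field_simp
    have hgf : ∀ t : ℝ, g t x = f t := fun t => hg t x
    have habs : |g t₁ x - g t₂ x| = |f' ξ| * (t₂ - t₁) := by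
      rw [hgf, hgf, abs_sub_comm, hdiff, abs_mul, abs_of_pos (sub_pos.mpr h12)]
    have hb := gaussDerivBound d (‖x‖^2) ξ hξ0 ha0
    have c1 : ((d:ℝ)/2+2)/ξ ≤ ((d:ℝ)/2+2) * 2 / t₂ := by
      rw [div_le_div_iff₀ hξ0 ht₂]
      have hd0 : (0:ℝ) ≤ (d:ℝ)/2 := by positivity
      nlinarith [hξ.1]
    have c2 : (4*π*ξ)^(-(d:ℝ)/2) ≤ (2:ℝ)^(d:ℕ) * (4*π*(2*t₂))^(-(d:ℝ)/2) := by
      rw [gaussDouble d ξ hξ0]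
      have c2a : (4*π*(2*ξ))^(-(d:ℝ)/2) ≤ (4*π*t₂)^(-(d:ℝ)/2) := by
        apply Real.rpow_le_rpow_of_nonpos (by positivity)
        · have hle : t₂ ≤ 2*ξ := by nlinarith [hξ.1]
          nlinarith [pi_pos]
        · have := Nat.cast_nonneg (α := ℝ) d; linarith
      calc (2:ℝ)^((d:ℝ)/2) * (4*π*(2*ξ))^(-(d:ℝ)/2)
          ≤ (2:ℝ)^((d:ℝ)/2) * (4*π*t₂)^(-(d:ℝ)/2) :=
            mul_le_mul_of_nonneg_left c2a (by positivity)
        _ = (2:ℝ)^((d:ℝ)/2) * ((2:ℝ)^((d:ℝ)/2) * (4*π*(2*t₂))^(-(d:ℝ)/2)) := by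
            rw [← gaussDouble d t₂ ht₂]
        _ = (2:ℝ)^(d:ℕ) * (4*π*(2*t₂))^(-(d:ℝ)/2) := by rw [← mul_assoc, hEd2]
    have c3 : Real.exp (-‖x‖^2/(8*ξ)) ≤ Real.exp (-‖x‖^2/(8*t₂)) := by
      apply Real.exp_le_exp.mpr
      have h8 : ‖x‖^2/(8*t₂) ≤ ‖x‖^2/(8*ξ) := by
        rw [div_le_div_iff₀ (by linarith) (by linarith [hξ.2])]
        nlinarith [hξ.2]
      rw [neg_div, neg_div]
      linarith
    have hbb : |f' ξ| ≤ ((d:ℝ)/2+2) * 2^(d+1) / t₂ * g (2*t₂) x := by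
      calc |f' ξ| ≤ ((d:ℝ)/2+2)/ξ * ((4*π*ξ)^(-(d:ℝ)/2) * Real.exp (-‖x‖^2/(8*ξ))) := hb
        _ ≤ (((d:ℝ)/2+2)*2/t₂) *
              (((2:ℝ)^(d:ℕ) * (4*π*(2*t₂))^(-(d:ℝ)/2)) * Real.exp (-‖x‖^2/(8*t₂))) := by
            apply mul_le_mul c1 (mul_le_mul c2 c3 (Real.exp_pos _).le (by positivity))
              (by positivity) (by positivity)
        _ = ((d:ℝ)/2+2) * 2^(d+1) / t₂ * g (2*t₂) x := by
            rw [hg2 t₂ ht₂, pow_succ]; ring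
    have hr0 : (0:ℝ) < (t₂-t₁)/t₂ := div_pos (by linarith) ht₂
    have hr1 : (t₂-t₁)/t₂ ≤ 1 := by rw [div_le_one ht₂]; linarith
    have hrpow : (t₂-t₁)/t₂ ≤ ((t₂-t₁)/t₂)^(β/2) := by
      nth_rewrite 1 [← Real.rpow_one ((t₂-t₁)/t₂)]
      exact Real.rpow_le_rpow_of_exponent_ge hr0 hr1 (by linarith)
    calc |g t₁ x - g t₂ x| = |f' ξ| * (t₂ - t₁) := habs
      _ ≤ (((d:ℝ)/2+2) * 2^(d+1) / t₂ * g (2*t₂) x) * (t₂ - t₁) :=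
          mul_le_mul_of_nonneg_right hbb (by linarith)
      _ = ((d:ℝ)/2+2) * 2^(d+1) * ((t₂-t₁)/t₂) * g (2*t₂) x := by
          field_simp
      _ ≤ ((d:ℝ)/2+2) * 2^(d+1) * (((t₂-t₁)/t₂)^(β/2)) * g (2*t₂) x := by
          apply mul_le_mul_of_nonneg_right _ hG2
          apply mul_le_mul_of_nonneg_left hrpow (by positivity)
      _ = ((d:ℝ)/2+2) * 2^(d+1) * ((t₂-t₁)^(β/2) * (t₂^(-β/2) * g (2*t₂) x)) := by
          rw [hsplit t₂ ht₂]; ring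
      _ ≤ ((d:ℝ)/2+2) * 2^(d+1) *
            ((t₂-t₁)^(β/2) * (t₁^(-β/2) * g (2*t₁) x + t₂^(-β/2) * g (2*t₂) x)) := by
          apply mul_le_mul_of_nonneg_left _ (by positivity)
          apply mul_le_mul_of_nonneg_left _ hpow1
          linarith
      _ ≤ (((d:ℝ)/2+2) * 2^(d+1) + 2^(d+1)) *
            ((t₂-t₁)^(β/2) * (t₁^(-β/2) * g (2*t₁) x + t₂^(-β/2) * g (2*t₂) x)) := by
          apply mul_le_mul_of_nonneg_right _ (mul_nonneg hpow1 (by linarith))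
          have : (0:ℝ) ≤ (2:ℝ)^(d+1) := by positivity
          linarith
      _ = (((d:ℝ)/2+2) * 2^(d+1) + 2^(d+1)) * (t₂-t₁)^(β/2) *
            (t₁^(-β/2) * g (2*t₁) x + t₂^(-β/2) * g (2*t₂) x) := by ring
  · -- 2 t₁ ≤ t₂ : triangle inequality
    have h1 := hgnn t₁ ht₁
    have h2 := hgnn t₂ ht₂
    have hf₁ : (1:ℝ) ≤ (t₂-t₁)^(β/2) * t₁^(-β/2) := by
      rw [← hsplit t₁ ht₁]
      apply Real.one_le_rpow _ hβ2
      rw [le_div_iff₀ ht₁]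
      linarith
    have hf₂ : (1:ℝ)/2 ≤ (t₂-t₁)^(β/2) * t₂^(-β/2) := by
      rw [← hsplit t₂ ht₂]
      have hr0 : (0:ℝ) < (t₂-t₁)/t₂ := div_pos (by linarith) ht₂
      have hr1 : (t₂-t₁)/t₂ ≤ 1 := by rw [div_le_one ht₂]; linarith
      have hrpow : (t₂-t₁)/t₂ ≤ ((t₂-t₁)/t₂)^(β/2) := by
        nth_rewrite 1 [← Real.rpow_one ((t₂-t₁)/t₂)]
        exact Real.rpow_le_rpow_of_exponent_ge hr0 hr1 (by linarith)
      have hhalf : (1:ℝ)/2 ≤ (t₂-t₁)/t₂ := by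
        rw [div_le_div_iff₀ (by norm_num) ht₂]
        linarith
      linarith
    have k1 : g (2*t₁) x ≤ 2 * ((t₂-t₁)^(β/2) * t₁^(-β/2)) * g (2*t₁) x :=
      le_mul_of_one_le_left hG1 (by linarith)
    have k2 : g (2*t₂) x ≤ 2 * ((t₂-t₁)^(β/2) * t₂^(-β/2)) * g (2*t₂) x :=
      le_mul_of_one_le_left hG2 (by linarith)
    have hdn : (0:ℝ) ≤ (2:ℝ)^(d:ℕ) := by positivity
    calc |g t₁ x - g t₂ x| ≤ g t₁ x + g t₂ x := abs_le.mpr ⟨by linarith, by linarith⟩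
      _ ≤ (2:ℝ)^((d:ℝ)/2) * g (2*t₁) x + (2:ℝ)^((d:ℝ)/2) * g (2*t₂) x := by
          have m1 := hmono t₁ ht₁
          have m2 := hmono t₂ ht₂
          linarith
      _ ≤ (2:ℝ)^(d:ℕ) * g (2*t₁) x + (2:ℝ)^(d:ℕ) * g (2*t₂) x := by
          have := mul_le_mul_of_nonneg_right hEd hG1
          have := mul_le_mul_of_nonneg_right hEd hG2
          linarith
      _ ≤ (2:ℝ)^(d:ℕ) * (2 * ((t₂-t₁)^(β/2) * t₁^(-β/2)) * g (2*t₁) x)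
            + (2:ℝ)^(d:ℕ) * (2 * ((t₂-t₁)^(β/2) * t₂^(-β/2)) * g (2*t₂) x) := by
          have := mul_le_mul_of_nonneg_left k1 hdn
          have := mul_le_mul_of_nonneg_left k2 hdn
          linarith
      _ = 2^(d+1) * (t₂-t₁)^(β/2) * (t₁^(-β/2) * g (2*t₁) x + t₂^(-β/2) * g (2*t₂) x) := by
          rw [pow_succ]; ring
      _ ≤ (((d:ℝ)/2+2) * 2^(d+1) + 2^(d+1)) * (t₂-t₁)^(β/2) *
            (t₁^(-β/2) * g (2*t₁) x + t₂^(-β/2) * g (2*t₂) x) := by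
          apply mul_le_mul_of_nonneg_right _ (by linarith)
          apply mul_le_mul_of_nonneg_right _ hpow1
          have : (0:ℝ) ≤ ((d:ℝ)/2+2) * 2^(d+1) := by positivity
          linarith
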